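/- If a real random variable X satisfies E[X] = 0 and X ≤ b almost surely for some b > 0, then E[e^X] ≤ exp(φ(b)·E[X²]), where φ(t) = (e^t − t − 1)/t². -/

import Mathlib

open MeasureTheory

/-- `HasSum` expansion of `exp x - (1 + x)`. -/
lemma hasSum_exp_sub (x : ℝ) :
    HasSum (fun n : ℕ => x ^ (n + 2) / (n + 2).factorial) (Real.exp x - (1 + x)) := by
  have h : HasSum (fun n : ℕ => x ^ n / n.factorial) (Real.exp x) := by
    rw [Real.exp_eq_exp_ℝ]
    exact NormedSpace.expSeries_div_hasSum_exp x
  have h2 := (hasSum_nat_add_iff' (f := fun n : ℕ => x ^ n / n.factorial) 2).mpr h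
  simp only [Finset.sum_range_succ, Finset.sum_range_zero] at h2
  norm_num at h2
  convert h2 using 2

/-- For `x ≤ 0`, `exp x ≤ 1 + x + x²/2`. -/
lemma exp_le_quadratic_of_nonpos {x : ℝ} (hx : x ≤ 0) :
    Real.exp x ≤ 1 + x + x ^ 2 / 2 := by
  have hmono : AntitoneOn (fun y : ℝ => 1 + y + y ^ 2 / 2 - Real.exp y) (Set.Iic 0) := by
    apply antitoneOn_of_deriv_nonpos (convex_Iic 0)
    · fun_prop
    · fun_prop
    · intro y hy
      have hd : deriv (fun y : ℝ => 1 + y + y ^ 2 / 2 - Real.exp y) y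
          = 1 + y - Real.exp y := by
        have h1 : HasDerivAt (fun y : ℝ => 1 + y + y ^ 2 / 2 - Real.exp y)
            (1 + y - Real.exp y) y := by
          have h0 : HasDerivAt (fun y : ℝ => 1 + y + y ^ 2 / 2 - Real.exp y)
              (0 + 1 + (↑2 * y ^ 1) / 2 - Real.exp y) y :=
            (((hasDerivAt_const y (1:ℝ)).add (hasDerivAt_id y)).add
              ((hasDerivAt_pow 2 y).div_const 2)).sub (Real.hasDerivAt_exp y)
          convert h0 using 1
          norm_num
        rw [h1.deriv]
      rw [hd]
      have := Real.add_one_le_exp y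
      linarith
  have h := hmono (Set.mem_Iic.mpr hx) (Set.mem_Iic.mpr le_rfl) hx
  simp only [Real.exp_zero] at h
  nlinarith

/-- For `0 ≤ b`, `1 + b + b²/2 ≤ exp b`. -/
lemma quadratic_le_exp_of_nonneg {b : ℝ} (hbpos : 0 ≤ b) :
    1 + b + b ^ 2 / 2 ≤ Real.exp b := by
  have h := hasSum_exp_sub b
  have h2 := (hasSum_nat_add_iff' (f := fun n : ℕ => b ^ (n + 2) / (n + 2).factorial) 1).mpr h
  simp only [Finset.sum_range_one] at h2
  norm_num at h2
  have hle : (0:ℝ) ≤ Real.exp b - (1 + b) - b ^ 2 / 2 :=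
    hasSum_le (f := fun _ : ℕ => (0:ℝ))
      (fun n => div_nonneg (pow_nonneg hbpos _) (by positivity)) hasSum_zero h2
  linarith

/-- Key pointwise bound: for `x ≤ b`, `exp x ≤ 1 + x + φ(b)·x²`. -/
lemma key_pointwise {b : ℝ} (hb : 0 < b) {x : ℝ} (hx : x ≤ b) :
    Real.exp x ≤ 1 + x + (Real.exp b - b - 1) / b ^ 2 * x ^ 2 := by
  set c : ℝ := (Real.exp b - b - 1) / b ^ 2 with hcdef
  have hb2 : (0:ℝ) < b ^ 2 := by positivity
  have hcancel : (Real.exp b - b - 1) / b ^ 2 * b ^ 2 = Real.exp b - b - 1 :=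
    div_mul_cancel₀ _ hb2.ne'
  have hcq : b ^ 2 / 2 ≤ Real.exp b - b - 1 := by
    have := quadratic_le_exp_of_nonneg hb.le
    linarith
  rcases le_or_gt x 0 with hx0 | hx0
  · have h1 := exp_le_quadratic_of_nonpos hx0
    have hc' : (1:ℝ) / 2 ≤ (Real.exp b - b - 1) / b ^ 2 := by
      rw [le_div_iff₀ hb2]
      linarith
    nlinarith [sq_nonneg x]
  · have hgoal : b ^ 2 * (Real.exp x - (1 + x)) ≤ x ^ 2 * (Real.exp b - (1 + b)) := by
      have hx' := (hasSum_exp_sub x).mul_left (b ^ 2)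
      have hb' := (hasSum_exp_sub b).mul_left (x ^ 2)
      refine hasSum_le (fun n => ?_) hx' hb'
      have hpow : b ^ 2 * x ^ (n + 2) ≤ x ^ 2 * b ^ (n + 2) := by
        have hxn : x ^ n ≤ b ^ n := pow_le_pow_left₀ hx0.le hx n
        have hx2b2 : (0:ℝ) ≤ x ^ 2 * b ^ 2 := by positivity
        calc b ^ 2 * x ^ (n + 2) = x ^ n * (x ^ 2 * b ^ 2) := by ring
          _ ≤ b ^ n * (x ^ 2 * b ^ 2) := mul_le_mul_of_nonneg_right hxn hx2b2
          _ = x ^ 2 * b ^ (n + 2) := by ring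
      have hfac : (0:ℝ) < ((n + 2).factorial : ℝ) := by positivity
      rw [mul_div_assoc', mul_div_assoc']
      exact (div_le_div_iff_of_pos_right hfac).mpr hpow
    have h5 : Real.exp x - (1 + x) ≤ c * x ^ 2 := by
      rw [← mul_le_mul_iff_right₀ hb2]
      calc b ^ 2 * (Real.exp x - (1 + x)) ≤ x ^ 2 * (Real.exp b - (1 + b)) := hgoal
        _ = x ^ 2 * (c * b ^ 2) := by rw [hcancel]; ring_nf
        _ = b ^ 2 * (c * x ^ 2) := by ring
    linarith

/-- If `E[X] = 0` and `X ≤ b` a.s. with `b > 0`, then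
`E[e^X] ≤ exp(φ(b)·E[X²])` where `φ(t) = (e^t − t − 1)/t²`. -/
theorem stmt_2 {Ω : Type*} [MeasurableSpace Ω] (P : Measure Ω) [IsProbabilityMeasure P]
    (X : Ω → ℝ) (b : ℝ) (hb : 0 < b)
    (hint : Integrable X P) (hmean : ∫ ω, X ω ∂P = 0)
    (hbd : ∀ᵐ ω ∂P, X ω ≤ b)
    (hexp : Integrable (fun ω => Real.exp (X ω)) P)
    (hsq : Integrable (fun ω => (X ω) ^ 2) P) :
    ∫ ω, Real.exp (X ω) ∂P
      ≤ Real.exp ((Real.exp b - b - 1) / b ^ 2 * ∫ ω, (X ω) ^ 2 ∂P) := by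
  set c : ℝ := (Real.exp b - b - 1) / b ^ 2 with hc
  have hc0 : 0 ≤ c := by
    rw [hc]
    exact div_nonneg (by linarith [Real.add_one_le_exp b]) (by positivity)
  have hint2 : Integrable (fun ω => 1 + X ω + c * X ω ^ 2) P := by
    exact ((integrable_const 1).add hint).add (hsq.const_mul c)
  have h1 : ∫ ω, Real.exp (X ω) ∂P ≤ ∫ ω, (1 + X ω + c * X ω ^ 2) ∂P := by
    refine integral_mono_ae hexp hint2 ?_
    filter_upwards [hbd] with ω hω
    exact key_pointwise hb hω
  have hi1 : Integrable (fun ω => 1 + X ω) P := (integrable_const 1).add hint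
  have hi0 : Integrable (fun _ : Ω => (1:ℝ)) P := integrable_const 1
  have h2 : ∫ ω, (1 + X ω + c * X ω ^ 2) ∂P = 1 + c * ∫ ω, X ω ^ 2 ∂P := by
    rw [integral_add hi1 (hsq.const_mul c), integral_add hi0 hint,
      integral_const, integral_const_mul]
    simp [hmean]
  have h3 : 1 + c * ∫ ω, X ω ^ 2 ∂P ≤ Real.exp (c * ∫ ω, X ω ^ 2 ∂P) := by
    have := Real.add_one_le_exp (c * ∫ ω, X ω ^ 2 ∂P)
    linarith
  calc ∫ ω, Real.exp (X ω) ∂P ≤ ∫ ω, (1 + X ω + c * X ω ^ 2) ∂P := h1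
    _ = 1 + c * ∫ ω, X ω ^ 2 ∂P := h2
    _ ≤ Real.exp (c * ∫ ω, X ω ^ 2 ∂P) := h3
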